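/- arXiv:2201.08518 — 2 statements merged into one kernel-verified Lean document; each statement's English description precedes it below -/
import Mathlib

section
/- Let A be a bounded linear operator on a Banach space V with ‖A‖ ≤ 1 and ‖A^m‖ ≤ 1/2 for a positive integer m. Then for every α ∈ (0,1] and every natural number t, ‖((1−α)I + αA)^t‖ ≤ min{1, 2·(1 − α/(2m))^t}. -/
set_option maxHeartbeats 1600000 in
set_option synthInstance.maxHeartbeats 400000 in
open Finset in
/-- For a multi-step contraction `A` (`‖A‖ ≤ 1`, `‖A^m‖ ≤ 1/2`) and `α ∈ (0,1]`,
`‖((1-α)I + αA)^t‖ ≤ min {1, 2(1 - α/(2m))^t}`. -/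
theorem stmt_2 {V : Type*} [NormedAddCommGroup V] [NormedSpace ℝ V] [CompleteSpace V]
    (A : V →L[ℝ] V) (m : ℕ) (hm : 1 ≤ m)
    (h1 : ‖A‖ ≤ 1) (h2 : ‖A ^ m‖ ≤ 1 / 2)
    (α : ℝ) (hα0 : 0 < α) (hα1 : α ≤ 1) (t : ℕ) :
    ‖((1 - α) • (1 : V →L[ℝ] V) + α • A) ^ t‖
      ≤ min 1 (2 * (1 - α / (2 * m)) ^ t) := by
  have hm' : (1:ℝ) ≤ (m:ℝ) := by exact_mod_cast hm
  have h2m : (0:ℝ) < 2 * m := by positivity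
  set r : ℝ := 1 - 1 / (2 * m) with hrdef
  have hr0 : (1:ℝ)/2 ≤ r := by
    have : 1 / (2 * (m:ℝ)) ≤ 1 / 2 := by
      apply one_div_le_one_div_of_le (by norm_num)
      linarith
    simp only [hrdef]; linarith
  have hr0' : (0:ℝ) ≤ r := le_trans (by norm_num) hr0
  have hr1 : r ≤ 1 := by
    have : 0 < 1 / (2 * (m:ℝ)) := by positivity
    simp only [hrdef]; linarith
  have hrm : (1:ℝ)/2 ≤ r ^ m := by
    have := one_add_mul_le_pow (a := -(1 / (2 * (m:ℝ)))) (by nlinarith) m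
    have hc : 1 + (m:ℝ) * -(1 / (2 * m)) = 1/2 := by field_simp; ring
    rw [hc] at this
    simpa [hrdef, sub_eq_add_neg] using this
  have hid : ‖(1 : V →L[ℝ] V)‖ ≤ 1 := ContinuousLinearMap.norm_id_le
  -- norms of powers
  have hpow : ∀ (B : V →L[ℝ] V), ‖B‖ ≤ 1 → ∀ n, ‖B ^ n‖ ≤ 1 := by
    intro B hB n
    induction n with
    | zero => simpa using hid
    | succ n ih =>
        calc ‖B ^ (n+1)‖ = ‖B ^ n * B‖ := by rw [pow_succ]
          _ ≤ ‖B ^ n‖ * ‖B‖ := norm_mul_le _ _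
          _ ≤ 1 * 1 := mul_le_mul ih hB (norm_nonneg _) zero_le_one
          _ = 1 := one_mul 1
  have hApow : ∀ n, ‖A ^ n‖ ≤ 1 := hpow A h1
  have hA : ∀ k, ‖A ^ k‖ ≤ 2 * r ^ k := by
    intro k
    have hsplit : A ^ k = (A ^ m) ^ (k / m) * A ^ (k % m) := by
      rw [← pow_mul, ← pow_add, Nat.div_add_mod]
    have hAm : ‖(A ^ m) ^ (k / m)‖ ≤ (1/2) ^ (k / m) := by
      rcases Nat.eq_zero_or_pos (k / m) with h | h
      · simpa [h] using hid
      · exact (norm_pow_le' _ h).trans (pow_le_pow_left₀ (norm_nonneg _) h2 _)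
    have hb1 : ‖A ^ k‖ ≤ (1/2) ^ (k / m) := by
      calc ‖A ^ k‖ ≤ ‖(A ^ m) ^ (k / m)‖ * ‖A ^ (k % m)‖ := by
            rw [hsplit]; exact norm_mul_le _ _
        _ ≤ (1/2) ^ (k / m) * 1 :=
            mul_le_mul hAm (hApow _) (norm_nonneg _) (by positivity)
        _ = (1/2) ^ (k / m) := mul_one _
    have hkle : k ≤ m * (k / m + 1) := by
      rw [Nat.mul_add, Nat.mul_one]
      have h1' := Nat.div_add_mod k m
      have h2' := Nat.mod_lt k (show 0 < m by omega)
      generalize m * (k / m) = x at h1' ⊢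
      omega
    have hb2 : ((1:ℝ)/2) ^ (k / m) ≤ 2 * r ^ k := by
      have h1' : ((1:ℝ)/2) ^ (k / m + 1) ≤ (r ^ m) ^ (k / m + 1) :=
        pow_le_pow_left₀ (by norm_num) hrm _
      rw [← pow_mul] at h1'
      have h4' : r ^ (m * (k / m + 1)) ≤ r ^ k := pow_le_pow_of_le_one hr0' hr1 hkle
      calc ((1:ℝ)/2) ^ (k/m) = 2 * (1/2)^(k/m+1) := by ring
        _ ≤ 2 * r ^ k := by linarith [h1'.trans h4']
    linarith
  have hα' : (0:ℝ) ≤ 1 - α := by linarith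
  have n1 : ∀ k : ℕ, ‖((1 - α) • (1 : V →L[ℝ] V)) ^ k‖ ≤ (1 - α) ^ k := by
    intro k
    rw [smul_pow, one_pow, norm_smul ((1 - α) ^ k) (1 : V →L[ℝ] V), Real.norm_eq_abs,
      abs_of_nonneg (pow_nonneg hα' k)]
    calc (1 - α) ^ k * ‖(1 : V →L[ℝ] V)‖ ≤ (1 - α) ^ k * 1 :=
          mul_le_mul_of_nonneg_left hid (pow_nonneg hα' k)
      _ = (1 - α) ^ k := mul_one _
  have n2 : ∀ j : ℕ, ‖(α • A) ^ j‖ ≤ α ^ j * (2 * r ^ j) := by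
    intro j
    rw [smul_pow, norm_smul (α ^ j) (A ^ j), Real.norm_eq_abs,
      abs_of_nonneg (pow_nonneg hα0.le j)]
    exact mul_le_mul_of_nonneg_left (hA _) (pow_nonneg hα0.le j)
  have n3 : ∀ c : ℕ, ‖(c : V →L[ℝ] V)‖ ≤ (c : ℝ) := by
    intro c
    have e : ((c : ℕ) : V →L[ℝ] V) = (c : ℕ) • (1 : V →L[ℝ] V) := by
      simp [nsmul_eq_mul]
    rw [e]
    calc ‖(c : ℕ) • (1 : V →L[ℝ] V)‖ ≤ (c : ℝ) * ‖(1 : V →L[ℝ] V)‖ := norm_nsmul_le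
      _ ≤ (c : ℝ) * 1 := mul_le_mul_of_nonneg_left hid (Nat.cast_nonneg _)
      _ = (c : ℝ) := mul_one _
  -- first bound: norm ≤ 1
  have hB : ‖(1 - α) • (1 : V →L[ℝ] V) + α • A‖ ≤ 1 := by
    have e1 : ‖(1 - α) • (1 : V →L[ℝ] V)‖ ≤ 1 - α := by simpa using n1 1
    have e2 : ‖α • A‖ ≤ α := by
      rw [norm_smul α A, Real.norm_eq_abs, abs_of_pos hα0]
      calc α * ‖A‖ ≤ α * 1 := mul_le_mul_of_nonneg_left h1 hα0.le
        _ = α := mul_one _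
    calc ‖(1 - α) • (1 : V →L[ℝ] V) + α • A‖
        ≤ ‖(1 - α) • (1 : V →L[ℝ] V)‖ + ‖α • A‖ := norm_add_le _ _
      _ ≤ (1 - α) + α := add_le_add e1 e2
      _ = 1 := by ring
  have hB1 : ‖((1 - α) • (1 : V →L[ℝ] V) + α • A) ^ t‖ ≤ 1 := hpow _ hB t
  -- second bound via binomial
  have hcomm : Commute ((1 - α) • (1 : V →L[ℝ] V)) (α • A) := by
    unfold Commute SemiconjBy
    rw [smul_mul_assoc, mul_smul_comm, smul_mul_assoc, mul_smul_comm, one_mul, mul_one,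
      smul_comm]
  have hB2 : ‖((1 - α) • (1 : V →L[ℝ] V) + α • A) ^ t‖ ≤ 2 * (1 - α / (2 * m)) ^ t := by
    rw [hcomm.add_pow]
    calc ‖∑ k ∈ range (t + 1), ((1 - α) • (1 : V →L[ℝ] V)) ^ k * (α • A) ^ (t - k) *
            (t.choose k : V →L[ℝ] V)‖
        ≤ ∑ k ∈ range (t + 1),
            (1 - α) ^ k * (α ^ (t - k) * (2 * r ^ (t - k))) * (t.choose k : ℝ) := by
          refine (norm_sum_le _ _).trans (Finset.sum_le_sum fun k _ => ?_)
          calc ‖((1 - α) • (1 : V →L[ℝ] V)) ^ k * (α • A) ^ (t - k) *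
                  (t.choose k : V →L[ℝ] V)‖
              ≤ ‖((1 - α) • (1 : V →L[ℝ] V)) ^ k * (α • A) ^ (t - k)‖ *
                  ‖(t.choose k : V →L[ℝ] V)‖ := norm_mul_le _ _
            _ ≤ ‖((1 - α) • (1 : V →L[ℝ] V)) ^ k‖ * ‖(α • A) ^ (t - k)‖ *
                  ‖(t.choose k : V →L[ℝ] V)‖ :=
                mul_le_mul_of_nonneg_right (norm_mul_le _ _) (norm_nonneg _)
            _ ≤ (1 - α) ^ k * (α ^ (t - k) * (2 * r ^ (t - k))) * (t.choose k : ℝ) := by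
                refine mul_le_mul (mul_le_mul (n1 k) (n2 (t - k)) (norm_nonneg _)
                  (pow_nonneg hα' k)) (n3 _) (norm_nonneg _) ?_
                positivity
      _ = 2 * ((1 - α) + α * r) ^ t := by
          rw [add_pow, Finset.mul_sum]
          refine Finset.sum_congr rfl fun k _ => ?_
          rw [mul_pow]
          ring
      _ = 2 * (1 - α / (2 * m)) ^ t := by
          congr 2
          simp only [hrdef]
          field_simp
          ring
  exact le_min hB1 hB2
end

section
/- In a finite-state finite-action discounted MDP with optimal Q-function θ* and Bellman optimality operator h, every Q-function θ satisfies the entrywise bound |θ* − θ| ≤ max{ |(I − γP^{π_θ})^{-1}(h(θ) − θ)|, |(I − γP^{π_*})^{-1}(h(θ) − θ)| }, where π_θ and π_* are greedy policies for θ and θ* respectively. In particular, ‖θ − θ*‖_∞ ≤ max over A ∈ {γP^{π_θ}, γP^{π_*}} of ‖(I − A)^{-1}(h(θ) − θ)‖_∞. -/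
lemma aux_mmatrix {n : Type*} [Fintype n] [DecidableEq n] [Nonempty n]
    (B : Matrix n n ℝ) (γ : ℝ) (hγ1 : γ < 1) (hB0 : ∀ p q, 0 ≤ B p q)
    (hBrow : ∀ p, ∑ q, B p q ≤ γ) :
    IsUnit (1 - B).det ∧
      ∀ w : n → ℝ, (∀ p, 0 ≤ w p) → ∀ p, 0 ≤ (1 - B)⁻¹.mulVec w p := by
  have hγ0 : 0 ≤ γ := le_trans (Finset.sum_nonneg fun q _ => hB0 (Classical.arbitrary n) q)
    (hBrow _)
  have hdet : IsUnit (1 - B).det := by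
    rw [isUnit_iff_ne_zero]
    intro h0
    obtain ⟨v, hv, hmv⟩ := (Matrix.exists_mulVec_eq_zero_iff).mpr h0
    apply hv
    have hfix : ∀ p, v p = B.mulVec v p := by
      intro p
      have := congrFun hmv p
      rw [Matrix.sub_mulVec, Matrix.one_mulVec] at this
      have := sub_eq_zero.mp this
      exact this
    set s := Finset.univ.sup' Finset.univ_nonempty (fun p => |v p|) with hs
    obtain ⟨p0, -, hp0⟩ := Finset.exists_mem_eq_sup' Finset.univ_nonempty (fun p => |v p|)
    have hs0 : 0 ≤ s := by
      have := Finset.le_sup' (fun p => |v p|) (Finset.mem_univ p0)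
      exact le_trans (abs_nonneg (v p0)) this
    have hle : s ≤ γ * s := by
      rw [hp0] at hs
      calc s = |B.mulVec v p0| := by rw [hs, hfix]
        _ ≤ ∑ q, B p0 q * |v q| := by
            refine le_trans (Finset.abs_sum_le_sum_abs _ _) ?_
            refine Finset.sum_le_sum fun q _ => ?_
            rw [abs_mul, abs_of_nonneg (hB0 p0 q)]
        _ ≤ ∑ q, B p0 q * s := by
            refine Finset.sum_le_sum fun q _ => ?_
            exact mul_le_mul_of_nonneg_left (Finset.le_sup' (fun p => |v p|) (Finset.mem_univ q)) (hB0 p0 q)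
        _ = (∑ q, B p0 q) * s := by rw [Finset.sum_mul]
        _ ≤ γ * s := mul_le_mul_of_nonneg_right (hBrow p0) hs0
    have hsz : s = 0 := by nlinarith
    funext p
    have h1 : |v p| ≤ s := Finset.le_sup' (fun p => |v p|) (Finset.mem_univ p)
    have := abs_nonneg (v p)
    have : |v p| = 0 := le_antisymm (hsz ▸ h1) (abs_nonneg _)
    simpa using abs_eq_zero.mp this
  refine ⟨hdet, fun w hw p => ?_⟩
  set u := (1 - B)⁻¹.mulVec w with hu
  have hequ : ∀ q, u q = B.mulVec u q + w q := by
    intro q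
    have h1 : (1 - B).mulVec u = w := by
      rw [hu, Matrix.mulVec_mulVec, Matrix.mul_nonsing_inv _ hdet, Matrix.one_mulVec]
    have := congrFun h1 q
    rw [Matrix.sub_mulVec, Matrix.one_mulVec] at this
    simp only [Pi.sub_apply] at this
    linarith
  set m := Finset.univ.inf' Finset.univ_nonempty u with hm
  obtain ⟨p0, -, hp0⟩ := Finset.exists_mem_eq_inf' Finset.univ_nonempty u
  have hmle : ∀ q, m ≤ u q := fun q => Finset.inf'_le _ (Finset.mem_univ q)
  have hm0 : 0 ≤ m := by
    by_contra hneg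
    push_neg at hneg
    have h1 : (∑ q, B p0 q) * m ≤ B.mulVec u p0 := by
      rw [Finset.sum_mul]
      refine Finset.sum_le_sum fun q _ => ?_
      exact mul_le_mul_of_nonneg_left (hmle q) (hB0 p0 q)
    have h2 : γ * m ≤ (∑ q, B p0 q) * m :=
      mul_le_mul_of_nonpos_right (hBrow p0) hneg.le
    have h3 : m = B.mulVec u p0 + w p0 := by rw [hm, hp0]; exact hequ p0
    have := hw p0
    nlinarith
  exact le_trans hm0 (hmle p)


/-- Local linearity for Q-learning: with `θs` the optimal Q-function (the Bellman fixed point)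
and `θ` any Q-function with greedy policy `π_θ`, one has entrywise
`|θs - θ| ≤ max |(I - γ M π_θ)⁻¹ (h θ - θ)| |(I - γ M π_s)⁻¹ (h θ - θ)|`, and in particular
the `ℓ∞` bound `‖θ - θs‖_∞ ≤ max of the two ‖(I - A)⁻¹(h θ - θ)‖_∞`. -/
theorem stmt_15 {X A : Type*} [Fintype X] [Fintype A] [DecidableEq X] [DecidableEq A]
    [Nonempty X] [Nonempty A]
    (r : X × A → ℝ) (P : X → A → X → ℝ) (γ : ℝ) (hγ0 : 0 < γ) (hγ1 : γ < 1)
    (hP0 : ∀ x a x', 0 ≤ P x a x') (hP1 : ∀ x a, ∑ x', P x a x' = 1)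
    (M : (X → A) → Matrix (X × A) (X × A) ℝ)
    (hM : ∀ (π : X → A) (p q : X × A),
      M π p q = if q.2 = π q.1 then P p.1 p.2 q.1 else 0)
    (θ θs : X × A → ℝ) (πθ πs : X → A)
    (hgreedyθ : ∀ x a, θ (x, a) ≤ θ (x, πθ x))
    (hgreedys : ∀ x a, θs (x, a) ≤ θs (x, πs x))
    (hθ : X × A → ℝ)
    (hdef : ∀ p : X × A, hθ p = r p + γ * ∑ x',
      P p.1 p.2 x' * Finset.univ.sup' Finset.univ_nonempty (fun a' => θ (x', a')))
    (hfix : ∀ p : X × A, θs p = r p + γ * ∑ x',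
      P p.1 p.2 x' * Finset.univ.sup' Finset.univ_nonempty (fun a' => θs (x', a'))) :
    (∀ p : X × A, |θs p - θ p| ≤
      max |(1 - γ • M πθ)⁻¹.mulVec (fun q => hθ q - θ q) p|
          |(1 - γ • M πs)⁻¹.mulVec (fun q => hθ q - θ q) p|) ∧
    Finset.univ.sup' Finset.univ_nonempty (fun p : X × A => |θ p - θs p|) ≤
      max (Finset.univ.sup' Finset.univ_nonempty
            (fun p : X × A => |(1 - γ • M πθ)⁻¹.mulVec (fun q => hθ q - θ q) p|))
          (Finset.univ.sup' Finset.univ_nonempty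
            (fun p : X × A => |(1 - γ • M πs)⁻¹.mulVec (fun q => hθ q - θ q) p|)) := by
  -- basic facts about the matrices γ • M π
  have hBentry : ∀ (π : X → A) p q, 0 ≤ (γ • M π) p q := by
    intro π p q
    rw [Matrix.smul_apply, hM, smul_eq_mul]
    split_ifs
    · exact mul_nonneg hγ0.le (hP0 _ _ _)
    · simp
  have hMmul : ∀ (π : X → A) (v : X × A → ℝ) p,
      (M π).mulVec v p = ∑ x', P p.1 p.2 x' * v (x', π x') := by
    intro π v p
    simp only [Matrix.mulVec, dotProduct, hM]
    rw [Fintype.sum_prod_type]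
    refine Finset.sum_congr rfl fun x' _ => ?_
    rw [Finset.sum_eq_single (π x')]
    · simp
    · intro b _ hb; simp [hb]
    · intro h; exact absurd (Finset.mem_univ _) h
  have hrow1 : ∀ (π : X → A) p, ∑ q, M π p q = 1 := by
    intro π p
    rw [Fintype.sum_prod_type]
    have h1 : ∀ x' : X, ∑ a', M π p (x', a') = P p.1 p.2 x' := by
      intro x'
      simp only [hM]
      simp
    rw [Finset.sum_congr rfl (fun x' _ => h1 x'), hP1]
  have hBrow : ∀ (π : X → A) p, ∑ q, (γ • M π) p q ≤ γ := by
    intro π p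
    have : ∑ q, (γ • M π) p q = γ * ∑ q, M π p q := by
      simp only [Matrix.smul_apply, smul_eq_mul]
      rw [Finset.mul_sum]
    rw [this, hrow1, mul_one]
  -- key facts from the M-matrix lemma
  have key1 := aux_mmatrix (γ • M πθ) γ hγ1 (hBentry πθ) (hBrow πθ)
  have key2 := aux_mmatrix (γ • M πs) γ hγ1 (hBentry πs) (hBrow πs)
  -- greedy suprema
  have hsupθ : ∀ x : X, Finset.univ.sup' Finset.univ_nonempty (fun a' => θ (x, a'))
      = θ (x, πθ x) := fun x => le_antisymm
    (Finset.sup'_le _ _ fun a _ => hgreedyθ x a)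
    (Finset.le_sup' (fun a' => θ (x, a')) (Finset.mem_univ (πθ x)))
  have hsups : ∀ x : X, Finset.univ.sup' Finset.univ_nonempty (fun a' => θs (x, a'))
      = θs (x, πs x) := fun x => le_antisymm
    (Finset.sup'_le _ _ fun a _ => hgreedys x a)
    (Finset.le_sup' (fun a' => θs (x, a')) (Finset.mem_univ (πs x)))
  have hdef' : ∀ p : X × A, hθ p = r p + γ * (M πθ).mulVec θ p := by
    intro p
    rw [hMmul, hdef]
    congr 1
    rw [Finset.mul_sum, Finset.mul_sum]
    exact Finset.sum_congr rfl fun x' _ => by rw [hsupθ]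
  have hfix' : ∀ p : X × A, θs p = r p + γ * (M πs).mulVec θs p := by
    intro p
    rw [hMmul, hfix]
    congr 1
    rw [Finset.mul_sum, Finset.mul_sum]
    exact Finset.sum_congr rfl fun x' _ => by rw [hsups]
  set d : X × A → ℝ := fun q => hθ q - θ q with hd
  set g1 : X × A → ℝ := fun p => γ * ((M πθ).mulVec θ p - (M πs).mulVec θ p) with hg1
  set g2 : X × A → ℝ := fun p => γ * ((M πθ).mulVec θs p - (M πs).mulVec θs p) with hg2
  have hg1pos : ∀ p, 0 ≤ g1 p := by
    intro p
    rw [hg1]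
    refine mul_nonneg hγ0.le ?_
    rw [hMmul, hMmul, ← Finset.sum_sub_distrib]
    refine Finset.sum_nonneg fun x' _ => ?_
    rw [← mul_sub]
    exact mul_nonneg (hP0 _ _ _) (sub_nonneg.mpr (hgreedyθ x' (πs x')))
  have hg2neg : ∀ p, g2 p ≤ 0 := by
    intro p
    rw [hg2]
    refine mul_nonpos_of_nonneg_of_nonpos hγ0.le ?_
    rw [hMmul, hMmul, ← Finset.sum_sub_distrib]
    refine Finset.sum_nonpos fun x' _ => ?_
    rw [← mul_sub]
    exact mul_nonpos_of_nonneg_of_nonpos (hP0 _ _ _)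
      (sub_nonpos.mpr (hgreedys x' (πθ x')))
  -- the two defect identities
  have hE2 : (1 - γ • M πs).mulVec (fun q => θs q - θ q) + g1 = d := by
    funext p
    simp only [Pi.add_apply, Matrix.sub_mulVec, Matrix.one_mulVec,
      Matrix.smul_mulVec, Pi.sub_apply, Pi.smul_apply, smul_eq_mul, hg1, hd]
    have hsub : (M πs).mulVec (fun q => θs q - θ q) p
        = (M πs).mulVec θs p - (M πs).mulVec θ p := by
      rw [show (fun q => θs q - θ q) = θs - θ from rfl, Matrix.mulVec_sub, Pi.sub_apply]
    rw [hsub]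
    have h1 := hdef' p
    have h2 := hfix' p
    ring_nf
    ring_nf at h1 h2
    linarith
  have hE1 : (1 - γ • M πθ).mulVec (fun q => θs q - θ q) + g2 = d := by
    funext p
    simp only [Pi.add_apply, Matrix.sub_mulVec, Matrix.one_mulVec,
      Matrix.smul_mulVec, Pi.sub_apply, Pi.smul_apply, smul_eq_mul, hg2, hd]
    have hsub : (M πθ).mulVec (fun q => θs q - θ q) p
        = (M πθ).mulVec θs p - (M πθ).mulVec θ p := by
      rw [show (fun q => θs q - θ q) = θs - θ from rfl, Matrix.mulVec_sub, Pi.sub_apply]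
    rw [hsub]
    have h1 := hdef' p
    have h2 := hfix' p
    ring_nf
    ring_nf at h1 h2
    linarith
  -- apply the inverses
  have hinvcancel : ∀ (N : Matrix (X × A) (X × A) ℝ), IsUnit N.det →
      ∀ y : X × A → ℝ, N⁻¹.mulVec (N.mulVec y) = y := by
    intro N hN y
    rw [Matrix.mulVec_mulVec, Matrix.nonsing_inv_mul _ hN, Matrix.one_mulVec]
  have hv2 : (1 - γ • M πs)⁻¹.mulVec d
      = (fun q => θs q - θ q) + (1 - γ • M πs)⁻¹.mulVec g1 := by
    conv_lhs => rw [← hE2]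
    rw [Matrix.mulVec_add, hinvcancel _ key2.1]
  have hv1 : (1 - γ • M πθ)⁻¹.mulVec d
      = (fun q => θs q - θ q) + (1 - γ • M πθ)⁻¹.mulVec g2 := by
    conv_lhs => rw [← hE1]
    rw [Matrix.mulVec_add, hinvcancel _ key1.1]
  have hle2 : ∀ p, θs p - θ p ≤ (1 - γ • M πs)⁻¹.mulVec d p := by
    intro p
    have := congrFun hv2 p
    rw [Pi.add_apply] at this
    have hnn := key2.2 g1 hg1pos p
    linarith
  have hle1 : ∀ p, (1 - γ • M πθ)⁻¹.mulVec d p ≤ θs p - θ p := by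
    intro p
    have := congrFun hv1 p
    rw [Pi.add_apply] at this
    have hnn := key1.2 (-g2) (fun q => by simpa using neg_nonneg.mpr (hg2neg q)) p
    rw [Matrix.mulVec_neg, Pi.neg_apply] at hnn
    linarith
  have main : ∀ p : X × A, |θs p - θ p| ≤
      max |(1 - γ • M πθ)⁻¹.mulVec d p| |(1 - γ • M πs)⁻¹.mulVec d p| := by
    intro p
    rw [abs_le]
    constructor
    · have h1 := hle1 p
      have h2 := neg_abs_le ((1 - γ • M πθ)⁻¹.mulVec d p)
      have h3 := le_max_left |(1 - γ • M πθ)⁻¹.mulVec d p| |(1 - γ • M πs)⁻¹.mulVec d p|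
      linarith
    · have h1 := hle2 p
      have h2 := le_abs_self ((1 - γ • M πs)⁻¹.mulVec d p)
      have h3 := le_max_right |(1 - γ • M πθ)⁻¹.mulVec d p| |(1 - γ • M πs)⁻¹.mulVec d p|
      linarith
  refine ⟨main, ?_⟩
  refine Finset.sup'_le _ _ fun p _ => ?_
  rw [abs_sub_comm]
  refine le_trans (main p) (max_le_max ?_ ?_)
  · exact Finset.le_sup' (fun p : X × A => |(1 - γ • M πθ)⁻¹.mulVec d p|) (Finset.mem_univ p)
  · exact Finset.le_sup' (fun p : X × A => |(1 - γ • M πs)⁻¹.mulVec d p|) (Finset.mem_univ p)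
end
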